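/- Let C > 1. If t₁ and t₂ are real numbers with t₁ ≥ C s* + (1−q)/γ and t₂ ≥ C s* + (1−q)/γ (or with t₁ ≤ −(C s* + (1−q)/γ) and t₂ ≤ −(C s* + (1−q)/γ)), then β|j(t₁) − j(t₂)| ≤ C^{q−2} α |t₁ − t₂|. -/

import Mathlib

/-- The superposition function `j` from the first-order optimality system, with
`δ_γ = q^q γ^(1-q)`.  Powers are real powers. -/
noncomputable def jfun (q γ t : ℝ) : ℝ :=
  if 1 / γ < |t| then
    (q ^ q * γ ^ (1 - q) - q * (|t| + (q - 1) / γ) ^ (q - 1)) * Real.sign t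
  else 0

lemma jfun_neg (q γ t : ℝ) : jfun q γ (-t) = - jfun q γ t := by
  unfold jfun
  rw [abs_neg, Real.sign_neg]
  split <;> ring

/-- MVT-based two-point estimate for a negative power on `[m, ∞)`. -/
lemma abs_rpow_sub_rpow_le {p m x y : ℝ} (hp : p < 0) (hm : 0 < m)
    (hx : m ≤ x) (hy : m ≤ y) :
    |x ^ p - y ^ p| ≤ -p * m ^ (p - 1) * |x - y| := by
  have h := Convex.norm_image_sub_le_of_norm_hasDerivWithin_le
    (f := fun t : ℝ => t ^ p) (f' := fun t => p * t ^ (p - 1)) (s := Set.Ici m)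
    (C := -p * m ^ (p - 1))
    (fun z hz => (Real.hasDerivAt_rpow_const
      (Or.inl (ne_of_gt (hm.trans_le hz)))).hasDerivWithinAt)
    (fun z hz => by
      have hz0 : 0 < z := hm.trans_le hz
      have h1 : z ^ (p - 1) ≤ m ^ (p - 1) :=
        Real.rpow_le_rpow_of_nonpos hm hz (by linarith)
      have h2 : (0:ℝ) ≤ z ^ (p - 1) := (Real.rpow_pos_of_pos hz0 _).le
      rw [Real.norm_eq_abs, abs_mul, abs_of_neg hp, abs_of_nonneg h2]
      exact mul_le_mul_of_nonneg_left h1 (by linarith))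
    (convex_Ici m) hy hx
  simpa [Real.norm_eq_abs, abs_sub_comm] using h

/-- On `((1-q)/γ, ∞)`, `jfun` is the positive part of a smooth function. -/
lemma jfun_eq_max {q γ t : ℝ} (hq0 : 0 < q) (hq1 : q < 1) (hγ : 0 < γ)
    (ht : (1 - q) / γ < t) :
    jfun q γ t = max (q ^ q * γ ^ (1 - q) - q * (t + (q - 1) / γ) ^ (q - 1)) 0 := by
  have h1q : 0 < 1 - q := by linarith
  have ht0 : 0 < t := lt_trans (by positivity) ht
  have hring : (q - 1) / γ = -((1 - q) / γ) := by ring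
  have hx0 : 0 < t + (q - 1) / γ := by rw [hring]; linarith
  have hqγ : q / γ = 1 / γ + (q - 1) / γ := by ring
  have hδ : q ^ q * γ ^ (1 - q) = q * (q / γ) ^ (q - 1) := by
    have e1 : q * q ^ (q - 1) = q ^ q := by
      nth_rewrite 1 [← Real.rpow_one q]
      rw [← Real.rpow_add hq0]; ring_nf
    have e2 : γ ^ (1 - q) = (γ ^ (q - 1))⁻¹ := by
      rw [← Real.rpow_neg hγ.le]; ring_nf
    rw [Real.div_rpow hq0.le hγ.le, e2, ← e1]
    field_simp
  unfold jfun
  rw [abs_of_pos ht0, Real.sign_of_pos ht0]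
  split_ifs with h
  · have hle : q / γ ≤ t + (q - 1) / γ := by rw [hqγ]; linarith
    have hmono : (t + (q - 1) / γ) ^ (q - 1) ≤ (q / γ) ^ (q - 1) :=
      Real.rpow_le_rpow_of_nonpos (by positivity) hle (by linarith)
    have hf : 0 ≤ q ^ q * γ ^ (1 - q) - q * (t + (q - 1) / γ) ^ (q - 1) := by
      rw [hδ]; nlinarith
    rw [max_eq_left hf, mul_one]
  · push_neg at h
    have hle : t + (q - 1) / γ ≤ q / γ := by rw [hqγ]; linarith
    have hmono : (q / γ) ^ (q - 1) ≤ (t + (q - 1) / γ) ^ (q - 1) :=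
      Real.rpow_le_rpow_of_nonpos hx0 hle (by linarith)
    have hf : q ^ q * γ ^ (1 - q) - q * (t + (q - 1) / γ) ^ (q - 1) ≤ 0 := by
      rw [hδ]; nlinarith
    exact (max_eq_right hf).symm

lemma jfun_core (q α β γ C : ℝ) (hq0 : 0 < q) (hq1 : q < 1)
    (hα : 0 < α) (hβ : 0 < β) (hγ : 0 < γ) (hC : 1 < C) {t₁ t₂ : ℝ}
    (ht₁ : C * ((β * q * (1 - q) / α) ^ (1 / (2 - q))) + (1 - q) / γ ≤ t₁)
    (ht₂ : C * ((β * q * (1 - q) / α) ^ (1 / (2 - q))) + (1 - q) / γ ≤ t₂) :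
    β * |jfun q γ t₁ - jfun q γ t₂| ≤ C ^ (q - 2) * α * |t₁ - t₂| := by
  have h1q : 0 < 1 - q := by linarith
  set K : ℝ := β * q * (1 - q) / α with hKdef
  have hK : 0 < K := by positivity
  set s : ℝ := K ^ (1 / (2 - q)) with hsdef
  have hs : 0 < s := Real.rpow_pos_of_pos hK _
  have hm : 0 < C * s := by positivity
  have hring : (q - 1) / γ = -((1 - q) / γ) := by ring
  have hx₁ : C * s ≤ t₁ + (q - 1) / γ := by rw [hring]; linarith
  have hx₂ : C * s ≤ t₂ + (q - 1) / γ := by rw [hring]; linarith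
  have hgt₁ : (1 - q) / γ < t₁ := by nlinarith
  have hgt₂ : (1 - q) / γ < t₂ := by nlinarith
  rw [jfun_eq_max hq0 hq1 hγ hgt₁, jfun_eq_max hq0 hq1 hγ hgt₂]
  set A : ℝ := (t₁ + (q - 1) / γ) ^ (q - 1) with hA
  set B : ℝ := (t₂ + (q - 1) / γ) ^ (q - 1) with hB
  set δ : ℝ := q ^ q * γ ^ (1 - q) with hδ'
  have step1 := abs_max_sub_max_le_abs (δ - q * A) (δ - q * B) 0
  have step2 : |(δ - q * A) - (δ - q * B)| = q * |A - B| := by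
    rw [show (δ - q * A) - (δ - q * B) = q * (B - A) from by ring, abs_mul,
      abs_of_pos hq0, abs_sub_comm]
  have step3 := abs_rpow_sub_rpow_le (p := q - 1) (by linarith : q - 1 < 0) hm hx₁ hx₂
  rw [← hA, ← hB] at step3
  have hdiff : |(t₁ + (q - 1) / γ) - (t₂ + (q - 1) / γ)| = |t₁ - t₂| := by
    congr 1; ring
  rw [hdiff] at step3
  have hconst : β * (q * (-(q - 1) * (C * s) ^ (q - 1 - 1))) = C ^ (q - 2) * α := by
    have hCs : (C * s) ^ (q - 1 - 1) = C ^ (q - 2) * s ^ (q - 2) := by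
      rw [show q - 1 - 1 = q - 2 by ring, Real.mul_rpow (by linarith) hs.le]
    have hsK : s ^ (q - 2) = K⁻¹ := by
      rw [hsdef, ← Real.rpow_mul hK.le,
        show (1 / (2 - q)) * (q - 2) = -1 by
          have h2q : (2:ℝ) - q ≠ 0 := by linarith
          field_simp; ring]
      exact Real.rpow_neg_one K
    rw [hCs, hsK, hKdef]
    field_simp
    ring
  calc β * |max (δ - q * A) 0 - max (δ - q * B) 0|
      ≤ β * (q * |A - B|) := by
        rw [← step2]; exact mul_le_mul_of_nonneg_left step1 hβ.le
    _ ≤ β * (q * (-(q - 1) * (C * s) ^ (q - 1 - 1) * |t₁ - t₂|)) := by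
        apply mul_le_mul_of_nonneg_left _ hβ.le
        exact mul_le_mul_of_nonneg_left step3 hq0.le
    _ = β * (q * (-(q - 1) * (C * s) ^ (q - 1 - 1))) * |t₁ - t₂| := by ring
    _ = C ^ (q - 2) * α * |t₁ - t₂| := by rw [hconst]

/-- Two-point contraction estimate with factor `C^(q−2) < 1` relative to `α/β`:
with `s* = (β q (1-q)/α)^(1/(2-q))` and `C > 1`, if `t₁, t₂ ≥ C s* + (1−q)/γ`,
or `t₁, t₂ ≤ −(C s* + (1−q)/γ)`, then
`β |j(t₁) − j(t₂)| ≤ C^(q−2) α |t₁ − t₂|`. -/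
theorem jfun_contraction (q α β γ C : ℝ) (hq0 : 0 < q) (hq1 : q < 1)
    (hα : 0 < α) (hβ : 0 < β) (hγ : 0 < γ) (hC : 1 < C) :
    ∀ t₁ t₂ : ℝ,
      ((C * ((β * q * (1 - q) / α) ^ (1 / (2 - q))) + (1 - q) / γ ≤ t₁ ∧
        C * ((β * q * (1 - q) / α) ^ (1 / (2 - q))) + (1 - q) / γ ≤ t₂) ∨
       (t₁ ≤ -(C * ((β * q * (1 - q) / α) ^ (1 / (2 - q))) + (1 - q) / γ) ∧
        t₂ ≤ -(C * ((β * q * (1 - q) / α) ^ (1 / (2 - q))) + (1 - q) / γ))) →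
      β * |jfun q γ t₁ - jfun q γ t₂| ≤ C ^ (q - 2) * α * |t₁ - t₂| := by
  intro t₁ t₂ h
  rcases h with ⟨h1, h2⟩ | ⟨h1, h2⟩
  · exact jfun_core q α β γ C hq0 hq1 hα hβ hγ hC h1 h2
  · have ha1 : C * ((β * q * (1 - q) / α) ^ (1 / (2 - q))) + (1 - q) / γ ≤ -t₁ := by
      linarith
    have ha2 : C * ((β * q * (1 - q) / α) ^ (1 / (2 - q))) + (1 - q) / γ ≤ -t₂ := by
      linarith
    have := jfun_core q α β γ C hq0 hq1 hα hβ hγ hC ha1 ha2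
    rw [jfun_neg, jfun_neg] at this
    calc β * |jfun q γ t₁ - jfun q γ t₂|
        = β * |-jfun q γ t₁ - -jfun q γ t₂| := by rw [← abs_neg]; congr 1; ring
      _ ≤ C ^ (q - 2) * α * |-t₁ - -t₂| := this
      _ = C ^ (q - 2) * α * |t₁ - t₂| := by rw [← abs_neg (t₁ - t₂)]; congr 1; ring
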